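/- Let (𝔄, G, Θ) be a C*-dynamical system with 𝔄 separable and G countable discrete amenable, (F_k) a right Følner sequence, S a nonempty set of states on 𝔄, x ∈ 𝔄 self-adjoint, and λ ∈ ℝ. Let P^F(S) be the set of weak*-limit points of sequences (φ_k ∘ Avg_{F_k}) with φ_k ∈ S, and ‖y‖_S := sup_{φ∈S} |φ(y)|. Then {ψ(x) : ψ ∈ P^F(S)} = {λ} if and only if lim_{k→∞} ‖Avg_{F_k} x − λ·1‖_S = 0. -/

import Mathlib

open scoped ComplexOrder symmDiff

/-- A state on a unital C*-algebra, as an element of the weak-* dual. -/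
def IsState {A : Type*} [NormedRing A] [StarRing A] [CStarRing A] [NormedAlgebra ℂ A]
    [CompleteSpace A] [StarModule ℂ A] (φ : WeakDual ℂ A) : Prop :=
  φ 1 = 1 ∧ ∀ a : A, 0 ≤ φ (star a * a)

/-- An action by algebra automorphisms is a *-action if each automorphism preserves `star`,
i.e. each `Θ g` is a *-automorphism. -/
def IsStarAction {A G : Type*} [NormedRing A] [StarRing A] [NormedAlgebra ℂ A] [Group G]
    (Θ : G →* (A ≃ₐ[ℂ] A)) : Prop :=
  ∀ (g : G) (x : A), Θ g (star x) = star (Θ g x)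

/-- The ergodic average `Avg_F x = (1/|F|) ∑_{g ∈ F} Θ_g x`. -/
noncomputable def avg {A G : Type*} [NormedRing A] [NormedAlgebra ℂ A] [Group G]
    (Θ : G →* (A ≃ₐ[ℂ] A)) (F : Finset G) (x : A) : A :=
  ((F.card : ℂ))⁻¹ • ∑ g ∈ F, Θ g x

/-- A right Følner sequence: nonempty finite sets with `|F_k g Δ F_k| / |F_k| → 0`. -/
def RightFolner {G : Type*} [Group G] [DecidableEq G] (F : ℕ → Finset G) : Prop :=
  (∀ k, (F k).Nonempty) ∧ ∀ g : G, Filter.Tendsto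
    (fun k => ((Finset.image (· * g) (F k) ∆ F k).card : ℝ) / (F k).card)
    Filter.atTop (nhds 0)

open Filter Topology

section Helpers

variable {A : Type*} [NormedRing A] [StarRing A] [CStarRing A] [NormedAlgebra ℂ A]
    [CompleteSpace A] [StarModule ℂ A]

set_option linter.unusedSectionVars false

/-- A state is bounded: `‖φ a‖ ≤ 2 ‖a‖` (crude bound obtained by decomposing `a`
into real and imaginary parts). -/
lemma isState_norm_apply_le (φ : WeakDual ℂ A) (hφ : IsState φ) (a : A) :
    ‖φ a‖ ≤ 2 * ‖a‖ := by
  letI : CStarAlgebra A :=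
    { ‹NormedRing A›, ‹StarRing A›, ‹CompleteSpace A›, ‹CStarRing A›, ‹NormedAlgebra ℂ A›,
      ‹StarModule ℂ A› with }
  letI := CStarAlgebra.spectralOrder A
  haveI := CStarAlgebra.spectralOrderedRing A
  obtain ⟨h1, hpos⟩ := hφ
  have hpos' : ∀ y : A, 0 ≤ y → 0 ≤ φ y := by
    intro y hy
    rw [StarOrderedRing.nonneg_iff] at hy
    induction hy using AddSubmonoid.closure_induction with
    | mem z hz => obtain ⟨s, rfl⟩ := hz; exact hpos s
    | zero => simp
    | add y z hy hz hy' hz' => rw [map_add]; exact add_nonneg hy' hz'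
  have e1 : ∀ r : ℝ, φ (algebraMap ℝ A r) = (r : ℂ) := by
    intro r
    rw [IsScalarTower.algebraMap_apply ℝ ℂ A, Algebra.algebraMap_eq_smul_one, map_smul,
      smul_eq_mul, h1, mul_one, Complex.coe_algebraMap]
  have key : ∀ y : A, IsSelfAdjoint y → ‖φ y‖ ≤ ‖y‖ := by
    intro y hy
    have h2 : 0 ≤ φ (algebraMap ℝ A ‖y‖ - y) :=
      hpos' _ (sub_nonneg.mpr (hy.le_algebraMap_norm_self))
    have h3 : 0 ≤ φ (y - (-(algebraMap ℝ A ‖y‖))) :=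
      hpos' _ (sub_nonneg.mpr hy.neg_algebraMap_norm_le_self)
    rw [map_sub, e1, Complex.nonneg_iff] at h2
    rw [map_sub, map_neg, e1, Complex.nonneg_iff] at h3
    have him : (φ y).im = 0 := by
      have := h2.2
      simp only [Complex.sub_im, Complex.ofReal_im] at this
      linarith
    have hre1 : (φ y).re ≤ ‖y‖ := by
      have := h2.1
      simp only [Complex.sub_re, Complex.ofReal_re] at this
      linarith
    have hre2 : -‖y‖ ≤ (φ y).re := by
      have := h3.1
      simp only [Complex.sub_re, Complex.neg_re, Complex.ofReal_re, sub_neg_eq_add,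
        Complex.add_re] at this
      linarith
    have hrw : φ y = ((φ y).re : ℂ) := Complex.ext rfl (by simp [him])
    rw [hrw, Complex.norm_real, Real.norm_eq_abs]
    exact abs_le.mpr ⟨hre2, hre1⟩
  have hah : IsSelfAdjoint ((2 : ℂ)⁻¹ • (a + star a)) := by
    simp only [IsSelfAdjoint, star_smul, star_add, star_star, RCLike.star_def, map_inv₀, map_ofNat]
    rw [add_comm]
  have hak : IsSelfAdjoint ((2 * Complex.I)⁻¹ • (a - star a)) := by
    simp only [IsSelfAdjoint, star_smul, star_sub, star_star, RCLike.star_def, map_inv₀, map_mul,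
      map_ofNat, Complex.conj_I, mul_neg, inv_neg, neg_smul, neg_sub]
    rw [← smul_neg, neg_sub]
  have hdecomp : a = (2 : ℂ)⁻¹ • (a + star a) + Complex.I • ((2 * Complex.I)⁻¹ • (a - star a)) := by
    rw [smul_smul]
    have : Complex.I * (2 * Complex.I)⁻¹ = (2 : ℂ)⁻¹ := by
      field_simp
    rw [this]
    module
  have hnh : ‖(2 : ℂ)⁻¹ • (a + star a)‖ ≤ ‖a‖ := by
    rw [norm_smul]
    calc ‖(2 : ℂ)⁻¹‖ * ‖a + star a‖ ≤ 2⁻¹ * (‖a‖ + ‖star a‖) := by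
          gcongr
          · simp
          · exact norm_add_le _ _
      _ = ‖a‖ := by rw [norm_star]; ring
  have hnk : ‖(2 * Complex.I)⁻¹ • (a - star a)‖ ≤ ‖a‖ := by
    rw [norm_smul]
    calc ‖(2 * Complex.I)⁻¹‖ * ‖a - star a‖ ≤ 2⁻¹ * (‖a‖ + ‖star a‖) := by
          gcongr
          · simp [norm_inv, Complex.norm_I]
          · exact norm_sub_le _ _
      _ = ‖a‖ := by rw [norm_star]; ring
  calc ‖φ a‖ = ‖φ ((2:ℂ)⁻¹ • (a + star a)) + Complex.I * φ ((2 * Complex.I)⁻¹ • (a - star a))‖ := by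
        conv_lhs => rw [hdecomp]
        rw [map_add, map_smul φ Complex.I ((2 * Complex.I)⁻¹ • (a - star a)), smul_eq_mul]
    _ ≤ ‖φ ((2:ℂ)⁻¹ • (a + star a))‖ + ‖Complex.I * φ ((2 * Complex.I)⁻¹ • (a - star a))‖ :=
        norm_add_le _ _
    _ ≤ ‖a‖ + ‖a‖ := by
        rw [norm_mul, Complex.norm_I, one_mul]
        exact add_le_add ((key _ hah).trans hnh) ((key _ hak).trans hnk)
    _ = 2 * ‖a‖ := by ring

section avg
variable {G : Type*} [Group G] (Θ : G →* (A ≃ₐ[ℂ] A))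

lemma avg_add (F : Finset G) (y z : A) :
    avg Θ F (y + z) = avg Θ F y + avg Θ F z := by
  simp [avg, Finset.sum_add_distrib, smul_add]

lemma avg_smul (F : Finset G) (c : ℂ) (y : A) :
    avg Θ F (c • y) = c • avg Θ F y := by
  simp only [avg, map_smul, ← Finset.smul_sum, smul_comm c]

lemma norm_avg_le (hΘ : IsStarAction Θ) (F : Finset G) (y : A) :
    ‖avg Θ F y‖ ≤ ‖y‖ := by
  letI : CStarAlgebra A :=
    { ‹NormedRing A›, ‹StarRing A›, ‹CompleteSpace A›, ‹CStarRing A›, ‹NormedAlgebra ℂ A›,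
      ‹StarModule ℂ A› with }
  have hiso : ∀ g : G, ‖Θ g y‖ = ‖y‖ := by
    intro g
    let ψ : A →⋆ₐ[ℂ] A := { (Θ g : A ≃ₐ[ℂ] A).toAlgHom with map_star' := fun x => hΘ g x }
    have hinj : Function.Injective ψ := (Θ g).injective
    exact NonUnitalStarAlgHom.norm_map ψ hinj y
  rcases F.eq_empty_or_nonempty with rfl | hFne
  · simp [avg]
  · have hcard : (0 : ℝ) < F.card := by exact_mod_cast hFne.card_pos
    calc ‖avg Θ F y‖ = ‖((F.card : ℂ))⁻¹‖ * ‖∑ g ∈ F, Θ g y‖ := norm_smul _ _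
      _ ≤ (F.card : ℝ)⁻¹ * (F.card * ‖y‖) := by
          gcongr
          · simp
          · calc ‖∑ g ∈ F, Θ g y‖ ≤ ∑ g ∈ F, ‖Θ g y‖ := norm_sum_le _ _
              _ = F.card * ‖y‖ := by
                  rw [Finset.sum_congr rfl fun g _ => hiso g, Finset.sum_const, nsmul_eq_mul]
      _ = ‖y‖ := by field_simp
end avg

/-- A cluster point (along `atTop`) of a sequence taking values in a closed set lies in it. -/
lemma mapClusterPt_mem_closed {X ι : Type*} [TopologicalSpace X] {u : ι → X} {x : X}
    {L : Filter ι} {C : Set X} (hC : IsClosed C) (hm : ∀ k, u k ∈ C)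
    (h : MapClusterPt x L u) : x ∈ C := by
  have h1 : ClusterPt x (Filter.principal C) :=
    h.clusterPt.mono (le_principal_iff.mpr (mem_map.mpr (Filter.Eventually.of_forall hm)))
  exact hC.closure_eq ▸ mem_closure_iff_clusterPt.mpr h1

/-- Any uniformly bounded sequence of linear functionals has a weak-* cluster point. -/
lemma exists_weakdual_mapClusterPt (u : ℕ → A → ℂ)
    (hadd : ∀ k y z, u k (y + z) = u k y + u k z)
    (hsmul : ∀ (k : ℕ) (c : ℂ) (y : A), u k (c • y) = c • u k y)
    (hbdd : ∀ k y, ‖u k y‖ ≤ 2 * ‖y‖) :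
    ∃ ψ : WeakDual ℂ A, MapClusterPt (⇑ψ : A → ℂ) atTop u := by
  set K : Set (A → ℂ) := Set.pi Set.univ fun y : A => Metric.closedBall (0 : ℂ) (2 * ‖y‖) with hK
  have hKc : IsCompact K := isCompact_univ_pi fun y => isCompact_closedBall _ _
  have hmem : ∀ k, u k ∈ K := by
    intro k y _
    simpa [Metric.mem_closedBall, dist_zero_right] using hbdd k y
  obtain ⟨f, hfK, hf⟩ := hKc.exists_mapClusterPt (f := atTop) (u := u)
    (le_principal_iff.mpr (mem_map.mpr (Filter.Eventually.of_forall hmem)))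
  have fadd : ∀ y z, f (y + z) = f y + f z := by
    intro y z
    have hCl : IsClosed {g : A → ℂ | g (y + z) = g y + g z} :=
      isClosed_eq (continuous_apply (y + z)) ((continuous_apply y).add (continuous_apply z))
    exact mapClusterPt_mem_closed (C := {g : A → ℂ | g (y + z) = g y + g z}) hCl
      (fun k => hadd k y z) hf
  have fsmul : ∀ (c : ℂ) (y : A), f (c • y) = c • f y := by
    intro c y
    have hCl : IsClosed {g : A → ℂ | g (c • y) = c • g y} :=
      isClosed_eq (continuous_apply (c • y)) ((continuous_apply y).const_smul c)
    exact mapClusterPt_mem_closed (C := {g : A → ℂ | g (c • y) = c • g y}) hCl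
      (fun k => hsmul k c y) hf
  have fbdd : ∀ y, ‖f y‖ ≤ 2 * ‖y‖ := by
    intro y
    have := hfK y (Set.mem_univ y)
    simpa [Metric.mem_closedBall, dist_zero_right] using this
  let ψ₀ : A →ₗ[ℂ] ℂ :=
    { toFun := f, map_add' := fadd, map_smul' := fsmul }
  exact ⟨(ψ₀.mkContinuous 2 fbdd : A →L[ℂ] ℂ), hf⟩

end Helpers

/-- Relative Herman ergodic theorem: the values at a self-adjoint `x` of all weak*-limit
points of sequences `(φ_k ∘ Avg_{F_k})` with `φ_k ∈ S` equal `{λ}` iff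
`‖Avg_{F_k} x − λ·1‖_S → 0`, where `‖y‖_S = sup_{φ∈S} |φ(y)|`. -/
theorem stmt18 {A G : Type*} [NormedRing A] [StarRing A] [CStarRing A] [NormedAlgebra ℂ A]
    [CompleteSpace A] [StarModule ℂ A] [TopologicalSpace.SeparableSpace A]
    [Group G] [Countable G] [DecidableEq G]
    (Θ : G →* (A ≃ₐ[ℂ] A)) (hΘ : IsStarAction Θ)
    (F : ℕ → Finset G) (hF : RightFolner F)
    (S : Set (WeakDual ℂ A)) (hSne : S.Nonempty) (hSstates : ∀ φ ∈ S, IsState φ)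
    (x : A) (hx : star x = x) (lam : ℝ) :
    ({z : ℂ | ∃ ψ : WeakDual ℂ A,
        (∃ φ : ℕ → WeakDual ℂ A, (∀ k, φ k ∈ S) ∧
          MapClusterPt (⇑ψ : A → ℂ) Filter.atTop
            (fun k (y : A) => φ k (avg Θ (F k) y))) ∧ z = ψ x}
      = {((lam : ℂ))}) ↔
    Filter.Tendsto
      (fun k => sSup {r : ℝ | ∃ φ ∈ S, r = ‖φ (avg Θ (F k) x - (lam : ℂ) • (1 : A))‖})
      Filter.atTop (nhds 0) := by
  classical
  obtain ⟨φ₀, hφ₀⟩ := hSne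
  set s : ℕ → Set ℝ :=
    fun k => {r : ℝ | ∃ φ ∈ S, r = ‖φ (avg Θ (F k) x - (lam : ℂ) • (1 : A))‖} with hs
  have hsne : ∀ k, (s k).Nonempty := fun k => ⟨_, φ₀, hφ₀, rfl⟩
  have hbdd : ∀ k, BddAbove (s k) := by
    intro k
    refine ⟨2 * ‖avg Θ (F k) x - (lam : ℂ) • (1 : A)‖, ?_⟩
    rintro r ⟨φ, hφS, rfl⟩
    exact isState_norm_apply_le φ (hSstates φ hφS) _
  have hsup0 : ∀ k, 0 ≤ sSup (s k) := fun k =>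
    le_trans (norm_nonneg _) (le_csSup (hbdd k) ⟨φ₀, hφ₀, rfl⟩)
  have hexists : ∀ (κ : ℕ → ℕ) (φseq : ℕ → WeakDual ℂ A), (∀ j, φseq j ∈ S) →
      ∃ ψ : WeakDual ℂ A,
        MapClusterPt (⇑ψ : A → ℂ) atTop (fun j (y : A) => φseq j (avg Θ (F (κ j)) y)) := by
    intro κ φseq hφS
    apply exists_weakdual_mapClusterPt
    · intro k y z; rw [avg_add, map_add]
    · intro k c y; rw [avg_smul, map_smul]
    · intro k y
      refine (isState_norm_apply_le _ (hSstates _ (hφS k)) _).trans ?_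
      have := norm_avg_le Θ hΘ (F (κ k)) y
      linarith
  have key : Filter.Tendsto (fun k => sSup (s k)) atTop (nhds 0) →
      ∀ (ψ : WeakDual ℂ A) (φseq : ℕ → WeakDual ℂ A), (∀ k, φseq k ∈ S) →
        MapClusterPt (⇑ψ : A → ℂ) atTop (fun k (y : A) => φseq k (avg Θ (F k) y)) →
        ψ x = (lam : ℂ) := by
    intro ht ψ φseq hφS hMCP
    have hc : MapClusterPt (ψ x) atTop (fun k => φseq k (avg Θ (F k) x)) :=
      MapClusterPt.continuousAt_comp (continuous_apply x).continuousAt hMCP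
    have hb : ∀ k, ‖φseq k (avg Θ (F k) x) - (lam : ℂ)‖ ≤ sSup (s k) := by
      intro k
      have h1 : φseq k (avg Θ (F k) x) - (lam : ℂ)
          = φseq k (avg Θ (F k) x - (lam : ℂ) • (1 : A)) := by
        rw [map_sub, map_smul, (hSstates _ (hφS k)).1, smul_eq_mul, mul_one]
      rw [h1]
      exact le_csSup (hbdd k) ⟨φseq k, hφS k, rfl⟩
    have hnorm : Filter.Tendsto (fun k => ‖φseq k (avg Θ (F k) x) - (lam : ℂ)‖)
        atTop (nhds 0) := squeeze_zero (fun k => norm_nonneg _) hb ht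
    have hlim : Filter.Tendsto (fun k => φseq k (avg Θ (F k) x)) atTop (nhds ((lam : ℂ))) := by
      rw [tendsto_iff_norm_sub_tendsto_zero]
      exact hnorm
    exact eq_of_nhds_neBot (hc.clusterPt.mono hlim)
  constructor
  · intro hset
    by_contra hnot
    rw [Metric.tendsto_atTop] at hnot
    push_neg at hnot
    obtain ⟨ε, hε, hfreq⟩ := hnot
    obtain ⟨κ, hκ, hκval⟩ := Nat.exists_strictMono_subsequence
      (P := fun k => ε ≤ sSup (s k)) (by
        intro N
        obtain ⟨k, hk1, hk2⟩ := hfreq (N + 1)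
        refine ⟨k, by omega, ?_⟩
        rw [Real.dist_eq, sub_zero, abs_of_nonneg (hsup0 k)] at hk2
        exact hk2)
    have hchoose : ∀ j, ∃ φ ∈ S, ε / 2 < ‖φ (avg Θ (F (κ j)) x - (lam : ℂ) • (1 : A))‖ := by
      intro j
      have hlt : ε / 2 < sSup (s (κ j)) := lt_of_lt_of_le (by linarith) (hκval j)
      obtain ⟨r, hrmem, hr⟩ := exists_lt_of_lt_csSup (hsne (κ j)) hlt
      obtain ⟨φ, hφS, rfl⟩ := hrmem
      exact ⟨φ, hφS, hr⟩
    choose φ' hφ'S hφ'gt using hchoose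
    set φfull : ℕ → WeakDual ℂ A := fun k => if h : ∃ j, κ j = k then φ' h.choose else φ₀
      with hφfull
    have hφfullS : ∀ k, φfull k ∈ S := by
      intro k
      rw [hφfull]
      dsimp only
      split
      · exact hφ'S _
      · exact hφ₀
    have hφfullκ : ∀ j, φfull (κ j) = φ' j := by
      intro j
      have h : ∃ j', κ j' = κ j := ⟨j, rfl⟩
      rw [hφfull]
      dsimp only
      rw [dif_pos h]
      congr 1
      exact hκ.injective h.choose_spec
    obtain ⟨ψ, hψ⟩ := hexists κ (fun j => φfull (κ j)) (fun j => hφfullS _)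
    have hψfull : MapClusterPt (⇑ψ : A → ℂ) atTop (fun k (y : A) => φfull k (avg Θ (F k) y)) :=
      MapClusterPt.of_comp hκ.tendsto_atTop hψ
    have hmem : ψ x ∈ ({((lam : ℂ))} : Set ℂ) := by
      rw [← hset]
      exact ⟨ψ, ⟨φfull, hφfullS, hψfull⟩, rfl⟩
    have hψx : ψ x = (lam : ℂ) := hmem
    have hc : MapClusterPt (ψ x) atTop (fun j => φfull (κ j) (avg Θ (F (κ j)) x)) :=
      MapClusterPt.continuousAt_comp (continuous_apply x).continuousAt hψ
    have hclosed : IsClosed {z : ℂ | ε / 2 ≤ ‖z - (lam : ℂ)‖} :=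
      isClosed_le continuous_const ((continuous_id.sub continuous_const).norm)
    have hin : ψ x ∈ {z : ℂ | ε / 2 ≤ ‖z - (lam : ℂ)‖} := by
      refine mapClusterPt_mem_closed hclosed (fun j => ?_) hc
      show ε / 2 ≤ ‖φfull (κ j) (avg Θ (F (κ j)) x) - (lam : ℂ)‖
      have h1 : φfull (κ j) (avg Θ (F (κ j)) x) - (lam : ℂ)
          = φ' j (avg Θ (F (κ j)) x - (lam : ℂ) • (1 : A)) := by
        rw [hφfullκ j, map_sub, map_smul, (hSstates _ (hφ'S j)).1, smul_eq_mul, mul_one]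
      rw [h1]
      exact (hφ'gt j).le
    rw [hψx] at hin
    simp only [Set.mem_setOf_eq, sub_self, norm_zero] at hin
    linarith
  · intro ht
    apply Set.eq_singleton_iff_unique_mem.mpr
    constructor
    · obtain ⟨ψ, hψ⟩ := hexists id (fun _ => φ₀) (fun _ => hφ₀)
      exact ⟨ψ, ⟨fun _ => φ₀, fun _ => hφ₀, hψ⟩,
        (key ht ψ (fun _ => φ₀) (fun _ => hφ₀) hψ).symm⟩
    · rintro z ⟨ψ, ⟨φseq, hφS, hMCP⟩, rfl⟩
      exact key ht ψ φseq hφS hMCP
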